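/- Let m₁ ≥ 2 be an even integer, m₂ ≥ 1, Q = m₁ + 2m₂, k = (m₁+2)/2, h = m₂ and N = k + h (so that (Q+2)/(Q−2) = N/(N−2)). Let Φ̃ : (0,∞)×ℝ^h → ℝ and let ψ : (0,∞)×ℝ^h → (0,∞) be of class C². Define u(y,z) = ψ(|y|,z) for (y,z) ∈ (ℝ^{m₁}∖{0})×ℝ^{m₂} and v(w,z) = ψ(|w|^{1/2},z) for (w,z) ∈ (ℝ^k∖{0})×ℝ^h. Then u satisfies the Grushin-type equation −Δ_y u(y,z) − 4|y|² Δ_z u(y,z) = Φ̃(|y|,z) u(y,z)^{(Q+2)/(Q−2)} at every point with y ≠ 0 if and only if v satisfies the Hardy–Sobolev-type equation −Δv(w,z) = (Φ̃(|w|^{1/2},z)/4) · v(w,z)^{N/(N−2)}/|w| at every point with w ≠ 0. -/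

import Mathlib

open MeasureTheory Real

noncomputable section

/-- The second derivative of `u` at `x` in direction `v` (twice in the same direction). -/
def sder {X : Type*} [NormedAddCommGroup X] [NormedSpace ℝ X] (u : X → ℝ) (x v : X) : ℝ :=
  fderiv ℝ (fun x' => fderiv ℝ u x' v) x v

lemma sder_line {X : Type*} [NormedAddCommGroup X] [NormedSpace ℝ X]
    {f : X → ℝ} {Ω : Set X} (hΩ : IsOpen Ω) {x : X} (hx : x ∈ Ω)
    (hf : ContDiffOn ℝ 2 f Ω) (v : X) :
    sder f x v = deriv (fun t : ℝ => deriv (fun s : ℝ => f (x + s • v)) t) 0 := by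
  have hline : ∀ t : ℝ, HasDerivAt (fun s : ℝ => x + s • v) v t := fun t => by
    simpa using ((hasDerivAt_id t).smul_const v).const_add x
  set F : X → ℝ := fun x' => fderiv ℝ f x' v with hFdef
  have hfd : ContDiffOn ℝ 1 (fderiv ℝ f) Ω := hf.fderiv_of_isOpen hΩ (by norm_num)
  have hF : ContDiffOn ℝ 1 F Ω :=
    (ContinuousLinearMap.apply ℝ ℝ v).contDiff.comp_contDiffOn hfd
  have hFdiff : DifferentiableAt ℝ F x :=
    ((hF.differentiableOn one_ne_zero).differentiableAt (hΩ.mem_nhds hx))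
  have hG : HasDerivAt (fun t : ℝ => F (x + t • v)) ((fderiv ℝ F x) v) 0 :=
    hFdiff.hasFDerivAt.comp_hasDerivAt_of_eq 0 (hline 0) (by simp)
  have hmem : ∀ᶠ t : ℝ in nhds 0, x + t • v ∈ Ω :=
    (hline 0).continuousAt.preimage_mem_nhds (by simpa using hΩ.mem_nhds hx)
  have heq : (fun t : ℝ => deriv (fun s : ℝ => f (x + s • v)) t) =ᶠ[nhds 0]
      (fun t : ℝ => F (x + t • v)) := by
    filter_upwards [hmem] with t ht
    have hdiff : DifferentiableAt ℝ f (x + t • v) :=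
      (hf.differentiableOn two_ne_zero).differentiableAt (hΩ.mem_nhds ht)
    exact (hdiff.hasFDerivAt.comp_hasDerivAt t (hline t)).deriv
  have : sder f x v = (fderiv ℝ F x) v := rfl
  rw [this, heq.deriv_eq, hG.deriv]

lemma radial_line {χ : ℝ → ℝ} (hχ : ContDiffOn ℝ 2 χ (Set.Ioi 0))
    {n : ℕ} (y : EuclideanSpace ℝ (Fin n)) (hy : y ≠ 0) (i : Fin n) :
    deriv (fun t : ℝ => deriv (fun s : ℝ => χ ‖y + s • EuclideanSpace.single i 1‖) t) 0
      = deriv (deriv χ) ‖y‖ * (y i / ‖y‖)^2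
        + deriv χ ‖y‖ * ((‖y‖ - (y i)^2/‖y‖)/‖y‖^2) := by
  set r := ‖y‖ with hrdef
  have hr : 0 < r := norm_pos_iff.mpr hy
  set a := y i with hadef
  set q : ℝ → ℝ := fun s => r^2 + 2*a*s + s^2 with hqdef
  have hnorm : ∀ s : ℝ, ‖y + s • EuclideanSpace.single i 1‖ = Real.sqrt (q s) := by
    intro s
    have h2 : ‖y + s • EuclideanSpace.single i 1‖^2 = q s := by
      rw [norm_add_sq_real, real_inner_smul_right, EuclideanSpace.inner_single_right]
      simp [hqdef, norm_smul, hrdef]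
      ring
    rw [← Real.sqrt_sq (norm_nonneg _), h2]
  have hq : ∀ s : ℝ, HasDerivAt q (2*a + 2*s) s := by
    intro s
    have h1 : HasDerivAt (fun s : ℝ => 2*a*s) (2*a) s := by
      simpa using (hasDerivAt_id s).const_mul (2*a)
    have h2 : HasDerivAt (fun s : ℝ => s^2) (2*s) s := by
      simpa using hasDerivAt_pow 2 s
    simpa [hqdef, add_assoc] using (h1.add h2).const_add (r^2)
  have hqc : Continuous q := by fun_prop
  have hq0 : q 0 = r^2 := by simp [hqdef]
  have hev : ∀ᶠ s : ℝ in nhds 0, 0 < q s := by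
    have : Set.Ioi (0:ℝ) ∈ nhds (q 0) := isOpen_Ioi.mem_nhds (Set.mem_Ioi.mpr (by rw [hq0]; positivity))
    exact hqc.continuousAt.preimage_mem_nhds this
  set N : ℝ → ℝ := fun s => Real.sqrt (q s) with hNdef
  have hN : ∀ s : ℝ, 0 < q s → HasDerivAt N ((a + s)/N s) s := by
    intro s hs
    have h := (show HasDerivAt N (1 / (2 * Real.sqrt (q s)) * (2 * a + 2 * s)) s from
      (Real.hasDerivAt_sqrt hs.ne').comp s (hq s))
    have hN0 : N s ≠ 0 := (Real.sqrt_pos.mpr hs).ne'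
    convert h using 1
    simp only [hNdef] at hN0 ⊢
    field_simp
  have hd1 : ∀ t ∈ Set.Ioi (0:ℝ), HasDerivAt χ (deriv χ t) t := fun t ht =>
    ((hχ.differentiableOn two_ne_zero).differentiableAt (isOpen_Ioi.mem_nhds ht)).hasDerivAt
  have hχ' : ContDiffOn ℝ 1 (deriv χ) (Set.Ioi 0) := hχ.deriv_of_isOpen isOpen_Ioi (by norm_num)
  have hd2 : ∀ t ∈ Set.Ioi (0:ℝ), HasDerivAt (deriv χ) (deriv (deriv χ) t) t := fun t ht =>
    ((hχ'.differentiableOn one_ne_zero).differentiableAt (isOpen_Ioi.mem_nhds ht)).hasDerivAt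
  have hinner : ∀ s : ℝ, 0 < q s →
      deriv (fun s' : ℝ => χ ‖y + s' • EuclideanSpace.single i 1‖) s
        = deriv χ (N s) * ((a + s)/N s) := by
    intro s hs
    have hNs : N s ∈ Set.Ioi (0:ℝ) := Real.sqrt_pos.mpr hs
    have h := ((hd1 (N s) hNs).comp s (hN s hs))
    have : (fun s' : ℝ => χ ‖y + s' • EuclideanSpace.single i 1‖) = fun s' => χ (N s') := by
      funext s'; rw [hnorm s']
    rw [this]
    exact h.deriv
  have houter : (fun t : ℝ => deriv (fun s : ℝ => χ ‖y + s • EuclideanSpace.single i 1‖) t)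
      =ᶠ[nhds 0] (fun t : ℝ => deriv χ (N t) * ((a + t)/N t)) := by
    filter_upwards [hev] with t ht
    exact hinner t ht
  rw [houter.deriv_eq]
  have hq00 : 0 < q 0 := by rw [hq0]; positivity
  have hN0 : N 0 = r := by rw [hNdef]; simp only [hq0]; exact Real.sqrt_sq hr.le
  have hA1 : HasDerivAt (fun t : ℝ => deriv χ (N t)) (deriv (deriv χ) r * (a/r)) 0 := by
    have h := (show HasDerivAt (fun t : ℝ => deriv χ (N t)) (deriv (deriv χ) (N 0) * ((a + 0) / N 0)) 0 from
      (hd2 (N 0) (by rw [hN0]; exact hr)).comp 0 (hN 0 hq00))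
    simpa [hN0] using h
  have hA2 : HasDerivAt (fun t : ℝ => (a + t)/N t) ((1*(N 0) - (a+0)*((a+0)/N 0))/(N 0)^2) 0 := by
    have hc : HasDerivAt (fun t : ℝ => a + t) 1 0 := by
      simpa using (hasDerivAt_id (0:ℝ)).const_add a
    exact hc.div (hN 0 hq00) (by rw [hN0]; exact hr.ne')
  have hA := (show HasDerivAt (fun t : ℝ => deriv χ (N t) * ((a + t)/N t)) _ 0 from hA1.mul hA2)
  rw [hA.deriv]
  rw [hN0]
  field_simp
  ring

lemma radial_sum {χ : ℝ → ℝ} (hχ : ContDiffOn ℝ 2 χ (Set.Ioi 0))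
    {n : ℕ} (y : EuclideanSpace ℝ (Fin n)) (hy : y ≠ 0) :
    ∑ i : Fin n, deriv (fun t : ℝ =>
        deriv (fun s : ℝ => χ ‖y + s • EuclideanSpace.single i 1‖) t) 0
      = deriv (deriv χ) ‖y‖ + ((n : ℝ) - 1)/‖y‖ * deriv χ ‖y‖ := by
  have hr : 0 < ‖y‖ := norm_pos_iff.mpr hy
  have hsum : ∑ i, (y i)^2 = ‖y‖^2 := by
    rw [EuclideanSpace.norm_eq, Real.sq_sqrt (by positivity)]
    simp [Real.norm_eq_abs, sq_abs]
  set r := ‖y‖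
  set d1 := deriv χ r
  set d2 := deriv (deriv χ) r
  have key : ∀ i : Fin n, deriv (fun t : ℝ =>
        deriv (fun s : ℝ => χ ‖y + s • EuclideanSpace.single i 1‖) t) 0
      = (d2/r^2)*(y i)^2 + (d1/r - (d1/r^3)*(y i)^2) := by
    intro i
    rw [radial_line hχ y hy i]
    field_simp
    ring
  rw [Finset.sum_congr rfl (fun i _ => key i)]
  rw [Finset.sum_add_distrib, ← Finset.mul_sum, hsum, Finset.sum_sub_distrib,
    ← Finset.mul_sum, hsum, Finset.sum_const, Finset.card_univ, Fintype.card_fin,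
    nsmul_eq_mul]
  field_simp

section aux
variable {χ : ℝ → ℝ}

lemma hasDerivAt_of_contDiffOn (hχ : ContDiffOn ℝ 2 χ (Set.Ioi 0)) {t : ℝ} (ht : 0 < t) :
    HasDerivAt χ (deriv χ t) t :=
  ((hχ.differentiableOn two_ne_zero).differentiableAt (isOpen_Ioi.mem_nhds ht)).hasDerivAt

lemma hasDerivAt_deriv_of_contDiffOn (hχ : ContDiffOn ℝ 2 χ (Set.Ioi 0)) {t : ℝ} (ht : 0 < t) :
    HasDerivAt (deriv χ) (deriv (deriv χ) t) t := by
  have hχ' : ContDiffOn ℝ 1 (deriv χ) (Set.Ioi 0) := hχ.deriv_of_isOpen isOpen_Ioi (by norm_num)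
  exact ((hχ'.differentiableOn one_ne_zero).differentiableAt (isOpen_Ioi.mem_nhds ht)).hasDerivAt

lemma sqrt_comp_d1 (hχ : ContDiffOn ℝ 2 χ (Set.Ioi 0)) {s : ℝ} (hs : 0 < s) :
    HasDerivAt (fun u : ℝ => χ (Real.sqrt u)) (deriv χ (Real.sqrt s) * (1/(2*Real.sqrt s))) s :=
  (hasDerivAt_of_contDiffOn hχ (Real.sqrt_pos.mpr hs)).comp s (Real.hasDerivAt_sqrt hs.ne')

lemma sqrt_comp_d2 (hχ : ContDiffOn ℝ 2 χ (Set.Ioi 0)) {s : ℝ} (hs : 0 < s) :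
    deriv (deriv (fun u : ℝ => χ (Real.sqrt u))) s
      = deriv (deriv χ) (Real.sqrt s) / (4*s) - deriv χ (Real.sqrt s) / (4*s*Real.sqrt s) := by
  have hev : deriv (fun u : ℝ => χ (Real.sqrt u)) =ᶠ[nhds s]
      fun u => deriv χ (Real.sqrt u) * (1/(2*Real.sqrt u)) := by
    filter_upwards [eventually_gt_nhds hs] with u hu
    exact (sqrt_comp_d1 hχ hu).deriv
  rw [hev.deriv_eq]
  have hx : (0:ℝ) < Real.sqrt s := Real.sqrt_pos.mpr hs
  have h1 : HasDerivAt (fun u : ℝ => deriv χ (Real.sqrt u))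
      (deriv (deriv χ) (Real.sqrt s) * (1/(2*Real.sqrt s))) s :=
    (hasDerivAt_deriv_of_contDiffOn hχ hx).comp s (Real.hasDerivAt_sqrt hs.ne')
  have h2 : HasDerivAt (fun u : ℝ => 1/(2*Real.sqrt u))
      ((0*(2*Real.sqrt s) - 1*(2*(1/(2*Real.sqrt s))))/(2*Real.sqrt s)^2) s :=
    (hasDerivAt_const s (1:ℝ)).div ((Real.hasDerivAt_sqrt hs.ne').const_mul 2)
      (by positivity)
  rw [(show HasDerivAt (fun u : ℝ => deriv χ (Real.sqrt u) * (1/(2*Real.sqrt u))) _ s from h1.mul h2).deriv]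
  set x := Real.sqrt s with hxd
  rw [show s = x*x from (Real.mul_self_sqrt hs.le).symm]
  field_simp
  ring

lemma sqrt_radial (hχ : ContDiffOn ℝ 2 χ (Set.Ioi 0)) {s : ℝ} (hs : 0 < s) (c : ℝ) :
    deriv (deriv (fun u : ℝ => χ (Real.sqrt u))) s
        + (c - 1)/s * deriv (fun u : ℝ => χ (Real.sqrt u)) s
      = (deriv (deriv χ) (Real.sqrt s)
          + (2*c - 3)/(Real.sqrt s) * deriv χ (Real.sqrt s)) / (4*s) := by
  rw [sqrt_comp_d2 hχ hs, (sqrt_comp_d1 hχ hs).deriv]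
  have hx : (0:ℝ) < Real.sqrt s := Real.sqrt_pos.mpr hs
  set x := Real.sqrt s with hxd
  rw [show s = x*x from (Real.mul_self_sqrt hs.le).symm]
  field_simp
  ring
end aux

lemma isOpen_fst_ne {m n : ℕ} :
    IsOpen {p : EuclideanSpace ℝ (Fin n) × EuclideanSpace ℝ (Fin m) | p.1 ≠ 0} :=
  isOpen_compl_singleton.preimage continuous_fst

section sums
variable {m n : ℕ} {ψ : ℝ × EuclideanSpace ℝ (Fin m) → ℝ}
  (hψ : ContDiffOn ℝ 2 ψ (Set.Ioi (0:ℝ) ×ˢ (Set.univ : Set (EuclideanSpace ℝ (Fin m)))))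
include hψ


lemma chiz_contDiffOn (z : EuclideanSpace ℝ (Fin m)) :
    ContDiffOn ℝ 2 (fun t => ψ (t, z)) (Set.Ioi 0) :=
  hψ.comp ((contDiff_id.prodMk contDiff_const).contDiffOn)
    (fun t ht => ⟨ht, Set.mem_univ _⟩)

lemma chiz2_contDiffOn (z : EuclideanSpace ℝ (Fin m)) :
    ContDiffOn ℝ 2 (fun t => ψ (Real.sqrt t, z)) (Set.Ioi 0) := by
  intro t ht
  have h1 : ContDiffAt ℝ 2 (fun t => ψ (t, z)) (Real.sqrt t) :=
    (chiz_contDiffOn hψ z).contDiffAt (isOpen_Ioi.mem_nhds (Real.sqrt_pos.mpr ht))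
  exact (h1.comp t (Real.contDiffAt_sqrt (ne_of_gt ht))).contDiffWithinAt

lemma f1_contDiffOn :
    ContDiffOn ℝ 2
      (fun p : EuclideanSpace ℝ (Fin n) × EuclideanSpace ℝ (Fin m) => ψ (‖p.1‖, p.2))
      {p | p.1 ≠ 0} := by
  apply hψ.comp
  · intro p hp
    exact (((contDiffAt_norm ℝ hp).comp p contDiffAt_fst).prodMk contDiffAt_snd).contDiffWithinAt
  · intro p hp
    exact ⟨norm_pos_iff.mpr hp, Set.mem_univ _⟩

lemma f2_contDiffOn :
    ContDiffOn ℝ 2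
      (fun p : EuclideanSpace ℝ (Fin n) × EuclideanSpace ℝ (Fin m) =>
        ψ (Real.sqrt ‖p.1‖, p.2))
      {p | p.1 ≠ 0} := by
  apply hψ.comp
  · intro p hp
    have hnp : ContDiffAt ℝ 2 (fun q : EuclideanSpace ℝ (Fin n) × EuclideanSpace ℝ (Fin m)
        => ‖q.1‖) p := (contDiffAt_norm ℝ hp).comp p contDiffAt_fst
    exact (((Real.contDiffAt_sqrt (norm_ne_zero_iff.mpr hp)).comp p hnp).prodMk
      contDiffAt_snd).contDiffWithinAt
  · intro p hp
    exact ⟨Real.sqrt_pos.mpr (norm_pos_iff.mpr hp), Set.mem_univ _⟩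

lemma side1_sum_y (y : EuclideanSpace ℝ (Fin n)) (z : EuclideanSpace ℝ (Fin m)) (hy : y ≠ 0) :
    ∑ i : Fin n,
        sder (fun p : EuclideanSpace ℝ (Fin n) × EuclideanSpace ℝ (Fin m) =>
          ψ (‖p.1‖, p.2)) (y, z) (EuclideanSpace.single i 1, 0)
      = deriv (deriv (fun t => ψ (t, z))) ‖y‖
        + ((n : ℝ) - 1)/‖y‖ * deriv (fun t => ψ (t, z)) ‖y‖ := by
  have hterm : ∀ i : Fin n,
      sder (fun p : EuclideanSpace ℝ (Fin n) × EuclideanSpace ℝ (Fin m) =>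
        ψ (‖p.1‖, p.2)) (y, z) (EuclideanSpace.single i 1, 0)
      = deriv (fun t : ℝ =>
          deriv (fun s : ℝ => (fun t' => ψ (t', z)) ‖y + s • EuclideanSpace.single i 1‖) t) 0 := by
    intro i
    rw [sder_line isOpen_fst_ne hy (f1_contDiffOn hψ)]
    congr 1; funext t; congr 1; funext s
    simp [Prod.smul_def]
  rw [Finset.sum_congr rfl (fun i _ => hterm i)]
  exact radial_sum (chiz_contDiffOn hψ z) y hy

lemma side1_sder_z (y : EuclideanSpace ℝ (Fin n)) (z : EuclideanSpace ℝ (Fin m)) (hy : y ≠ 0)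
    (j : Fin m) :
    sder (fun p : EuclideanSpace ℝ (Fin n) × EuclideanSpace ℝ (Fin m) =>
        ψ (‖p.1‖, p.2)) (y, z) (0, EuclideanSpace.single j 1)
      = deriv (fun t : ℝ =>
          deriv (fun s : ℝ => ψ (‖y‖, z + s • EuclideanSpace.single j 1)) t) 0 := by
  rw [sder_line isOpen_fst_ne hy (f1_contDiffOn hψ)]
  congr 1; funext t; congr 1; funext s
  simp [Prod.smul_def]

lemma side2_sum_w (w : EuclideanSpace ℝ (Fin n)) (z : EuclideanSpace ℝ (Fin m)) (hw : w ≠ 0) :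
    ∑ i : Fin n,
        sder (fun p : EuclideanSpace ℝ (Fin n) × EuclideanSpace ℝ (Fin m) =>
          ψ (Real.sqrt ‖p.1‖, p.2)) (w, z) (EuclideanSpace.single i 1, 0)
      = (deriv (deriv (fun t => ψ (t, z))) (Real.sqrt ‖w‖)
          + (2*(n : ℝ) - 3)/(Real.sqrt ‖w‖) * deriv (fun t => ψ (t, z)) (Real.sqrt ‖w‖))
          / (4*‖w‖) := by
  have hterm : ∀ i : Fin n,
      sder (fun p : EuclideanSpace ℝ (Fin n) × EuclideanSpace ℝ (Fin m) =>
        ψ (Real.sqrt ‖p.1‖, p.2)) (w, z) (EuclideanSpace.single i 1, 0)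
      = deriv (fun t : ℝ =>
          deriv (fun s : ℝ =>
            (fun t' => ψ (Real.sqrt t', z)) ‖w + s • EuclideanSpace.single i 1‖) t) 0 := by
    intro i
    rw [sder_line isOpen_fst_ne hw (f2_contDiffOn hψ)]
    congr 1; funext t; congr 1; funext s
    simp [Prod.smul_def]
  rw [Finset.sum_congr rfl (fun i _ => hterm i)]
  rw [radial_sum (chiz2_contDiffOn hψ z) w hw]
  have hs : (0:ℝ) < ‖w‖ := norm_pos_iff.mpr hw
  have := sqrt_radial (chiz_contDiffOn hψ z) hs (n : ℝ)
  exact this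

lemma side2_sder_z (w : EuclideanSpace ℝ (Fin n)) (z : EuclideanSpace ℝ (Fin m)) (hw : w ≠ 0)
    (j : Fin m) :
    sder (fun p : EuclideanSpace ℝ (Fin n) × EuclideanSpace ℝ (Fin m) =>
        ψ (Real.sqrt ‖p.1‖, p.2)) (w, z) (0, EuclideanSpace.single j 1)
      = deriv (fun t : ℝ =>
          deriv (fun s : ℝ => ψ (Real.sqrt ‖w‖, z + s • EuclideanSpace.single j 1)) t) 0 := by
  rw [sder_line isOpen_fst_ne hw (f2_contDiffOn hψ)]
  congr 1; funext t; congr 1; funext s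
  simp [Prod.smul_def]

end sums

theorem stmt2 (m₁ m₂ k : ℕ) (hk : 2 ≤ k) (hm₁ : m₁ = 2 * (k - 1)) (hm₂ : 1 ≤ m₂)
    (Φ : ℝ × EuclideanSpace ℝ (Fin m₂) → ℝ)
    (ψ : ℝ × EuclideanSpace ℝ (Fin m₂) → ℝ)
    (hψ : ContDiffOn ℝ 2 ψ (Set.Ioi (0 : ℝ) ×ˢ (Set.univ : Set (EuclideanSpace ℝ (Fin m₂)))))
    (hψpos : ∀ q ∈ Set.Ioi (0 : ℝ) ×ˢ (Set.univ : Set (EuclideanSpace ℝ (Fin m₂))),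
      0 < ψ q) :
    -- the Grushin-type equation for `u(y,z) = ψ(|y|,z)` on `(ℝ^{m₁}\{0}) × ℝ^{m₂}`
    (∀ (y : EuclideanSpace ℝ (Fin m₁)) (z : EuclideanSpace ℝ (Fin m₂)), y ≠ 0 →
        -(∑ i : Fin m₁,
            sder (fun p : EuclideanSpace ℝ (Fin m₁) × EuclideanSpace ℝ (Fin m₂) =>
              ψ (‖p.1‖, p.2)) (y, z) (EuclideanSpace.single i 1, 0))
          - 4 * ‖y‖ ^ 2 * (∑ j : Fin m₂,
            sder (fun p : EuclideanSpace ℝ (Fin m₁) × EuclideanSpace ℝ (Fin m₂) =>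
              ψ (‖p.1‖, p.2)) (y, z) (0, EuclideanSpace.single j 1))
          = Φ (‖y‖, z) *
              ψ (‖y‖, z) ^ ((((m₁ : ℝ) + 2 * m₂) + 2) / (((m₁ : ℝ) + 2 * m₂) - 2)))
    ↔
    -- the Hardy–Sobolev-type equation for `v(w,z) = ψ(|w|^{1/2},z)` on `(ℝ^k\{0}) × ℝ^{m₂}`
    (∀ (w : EuclideanSpace ℝ (Fin k)) (z : EuclideanSpace ℝ (Fin m₂)), w ≠ 0 →
        -((∑ i : Fin k,
             sder (fun p : EuclideanSpace ℝ (Fin k) × EuclideanSpace ℝ (Fin m₂) =>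
               ψ (Real.sqrt ‖p.1‖, p.2)) (w, z) (EuclideanSpace.single i 1, 0))
           + ∑ j : Fin m₂,
             sder (fun p : EuclideanSpace ℝ (Fin k) × EuclideanSpace ℝ (Fin m₂) =>
               ψ (Real.sqrt ‖p.1‖, p.2)) (w, z) (0, EuclideanSpace.single j 1))
          = (Φ (Real.sqrt ‖w‖, z) / 4) *
              ψ (Real.sqrt ‖w‖, z) ^ (((k : ℝ) + m₂) / (((k : ℝ) + m₂) - 2)) / ‖w‖) := by
  have hm₁2 : 2 ≤ m₁ := by omega
  have hkR : (m₁ : ℝ) = 2*(k : ℝ) - 2 := by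
    have h : m₁ = 2*k - 2 := by omega
    rw [h]
    push_cast [Nat.cast_sub (by omega : 2 ≤ 2*k)]
    ring
  have hk2 : (2:ℝ) ≤ (k:ℝ) := by exact_mod_cast hk
  have hm2R : (1:ℝ) ≤ (m₂:ℝ) := by exact_mod_cast hm₂
  have hexp : (((m₁ : ℝ) + 2 * m₂) + 2) / (((m₁ : ℝ) + 2 * m₂) - 2)
      = ((k : ℝ) + m₂) / (((k : ℝ) + m₂) - 2) := by
    rw [hkR, div_eq_div_iff (by linarith) (by linarith)]
    ring
  have hc : 2*(k:ℝ) - 3 = (m₁:ℝ) - 1 := by rw [hkR]; ring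
  constructor
  · intro H
    -- derive the intermediate radial statement
    have hP : ∀ r : ℝ, 0 < r → ∀ z : EuclideanSpace ℝ (Fin m₂),
        -(deriv (deriv (fun t => ψ (t, z))) r + ((m₁:ℝ)-1)/r * deriv (fun t => ψ (t, z)) r)
          - 4*r^2*(∑ j : Fin m₂, deriv (fun t : ℝ =>
              deriv (fun s : ℝ => ψ (r, z + s • EuclideanSpace.single j 1)) t) 0)
        = Φ (r, z) * ψ (r, z) ^ (((k : ℝ) + m₂) / (((k : ℝ) + m₂) - 2)) := by
      intro r hr z
      set y : EuclideanSpace ℝ (Fin m₁) := r • EuclideanSpace.single ⟨0, by omega⟩ 1 with hydef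
      have hny : ‖y‖ = r := by
        rw [hydef, norm_smul, EuclideanSpace.norm_single]
        simp [abs_of_pos hr]
      have hy : y ≠ 0 := by
        intro h
        rw [h, norm_zero] at hny
        linarith
      have h := H y z hy
      rw [side1_sum_y hψ y z hy] at h
      simp only [side1_sder_z hψ y z hy] at h
      rw [hny, hexp] at h
      exact h
    intro w z hw
    have hs : (0:ℝ) < ‖w‖ := norm_pos_iff.mpr hw
    rw [side2_sum_w hψ w z hw]
    simp only [side2_sder_z hψ w z hw]
    set r : ℝ := Real.sqrt ‖w‖ with hrdef
    have hr : 0 < r := Real.sqrt_pos.mpr hs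
    have hr2 : r^2 = ‖w‖ := Real.sq_sqrt hs.le
    rw [← hr2, hc]
    have h := hP r hr z
    have h4 : (4*r^2 : ℝ) ≠ 0 := by positivity
    set T := deriv (deriv (fun t => ψ (t, z))) r + ((m₁:ℝ)-1)/r * deriv (fun t => ψ (t, z)) r
    set E := ∑ j : Fin m₂, deriv (fun t : ℝ =>
        deriv (fun s : ℝ => ψ (r, z + s • EuclideanSpace.single j 1)) t) 0
    have e1 : -(T/(4*r^2) + E) = (-T - 4*r^2*E)/(4*r^2) := by
      field_simp
      ring
    have e2 : Φ (r, z)/4 * ψ (r, z) ^ (((k : ℝ) + m₂) / (((k : ℝ) + m₂) - 2)) / r^2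
        = (Φ (r, z) * ψ (r, z) ^ (((k : ℝ) + m₂) / (((k : ℝ) + m₂) - 2)))/(4*r^2) := by
      ring
    rw [e1, e2, h]
  · intro H
    have hP : ∀ r : ℝ, 0 < r → ∀ z : EuclideanSpace ℝ (Fin m₂),
        -(deriv (deriv (fun t => ψ (t, z))) r + ((m₁:ℝ)-1)/r * deriv (fun t => ψ (t, z)) r)
          - 4*r^2*(∑ j : Fin m₂, deriv (fun t : ℝ =>
              deriv (fun s : ℝ => ψ (r, z + s • EuclideanSpace.single j 1)) t) 0)
        = Φ (r, z) * ψ (r, z) ^ (((k : ℝ) + m₂) / (((k : ℝ) + m₂) - 2)) := by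
      intro r hr z
      set w : EuclideanSpace ℝ (Fin k) := (r^2) • EuclideanSpace.single ⟨0, by omega⟩ 1 with hwdef
      have hnw : ‖w‖ = r^2 := by
        rw [hwdef, norm_smul, EuclideanSpace.norm_single]
        simp [abs_of_pos (by positivity : (0:ℝ) < r^2)]
      have hw : w ≠ 0 := by
        intro h
        rw [h, norm_zero] at hnw
        exact (by positivity : (0:ℝ) < r^2).ne hnw
      have h := H w z hw
      rw [side2_sum_w hψ w z hw] at h
      simp only [side2_sder_z hψ w z hw] at h
      have hsq : Real.sqrt ‖w‖ = r := by rw [hnw]; exact Real.sqrt_sq hr.le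
      rw [hsq, hnw, hc] at h
      have h4 : (4*r^2 : ℝ) ≠ 0 := by positivity
      set T := deriv (deriv (fun t => ψ (t, z))) r + ((m₁:ℝ)-1)/r * deriv (fun t => ψ (t, z)) r
      set E := ∑ j : Fin m₂, deriv (fun t : ℝ =>
          deriv (fun s : ℝ => ψ (r, z + s • EuclideanSpace.single j 1)) t) 0
      have e1 : -(T/(4*r^2) + E) = (-T - 4*r^2*E)/(4*r^2) := by
        field_simp
        ring
      have e2 : Φ (r, z)/4 * ψ (r, z) ^ (((k : ℝ) + m₂) / (((k : ℝ) + m₂) - 2)) / r^2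
          = (Φ (r, z) * ψ (r, z) ^ (((k : ℝ) + m₂) / (((k : ℝ) + m₂) - 2)))/(4*r^2) := by
        ring
      rw [e1, e2] at h
      have h' := congrArg (fun x : ℝ => x * (4*r^2)) h
      simpa [div_mul_cancel₀ _ h4] using h'
    intro y z hy
    have hny : 0 < ‖y‖ := norm_pos_iff.mpr hy
    rw [side1_sum_y hψ y z hy]
    simp only [side1_sder_z hψ y z hy]
    rw [hexp]
    exact hP ‖y‖ hny z
end
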